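/- Let (X₁, X₂) be a pair of non-identically distributed log-normal random variables with X_i ~ LN(μ_i, σ_i²), i = 1, 2, let S⁻ be their counter-monotonic sum and φ⁻(u) = F_{X₁}^{-1}(u) + F_{X₂}^{-1}(1 − u) the aggregate loss function. Then for every p ∈ (0,1), the set E = {u ∈ (0,1) : φ⁻(u) = F_{S⁻}^{-1}(p)} has exactly two elements u_{p,1} < u_{p,2}, and for each j = 1, 2, VaR_p[S⁻] = VaR_{u_{p,j}}[X₁] + VaR_{1 − u_{p,j}}[X₂]. -/

import Mathlib

open MeasureTheory ProbabilityTheory Set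

noncomputable section

variable {Ω : Type*} [MeasurableSpace Ω]

/-- The cumulative distribution function of the random variable `X` under `P`. -/
def rvCdf (P : Measure Ω) (X : Ω → ℝ) : ℝ → ℝ := fun x => (P {ω | X ω ≤ x}).toReal

/-- The survival function `x ↦ P(X > x)`. -/
def rvSurv (P : Measure Ω) (X : Ω → ℝ) : ℝ → ℝ := fun x => (P {ω | x < X ω}).toReal

/-- The left inverse `F⁻¹(p) = inf {x | F x ≥ p}` of a cdf `F`. -/
def leftInv (F : ℝ → ℝ) (p : ℝ) : ℝ := sInf {x | p ≤ F x}

/-- The right inverse `F⁻¹⁺(p) = sup {x | F x ≤ p}` of a cdf `F`. -/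
def rightInv (F : ℝ → ℝ) (p : ℝ) : ℝ := sSup {x | F x ≤ p}

/-- `g : [0,1] → [0,1]` is a distortion function: nondecreasing with `g 0 = 0`, `g 1 = 1`. -/
def IsDistortion (g : ℝ → ℝ) : Prop :=
  MonotoneOn g (Icc 0 1) ∧ g 0 = 0 ∧ g 1 = 1 ∧ ∀ q ∈ Icc (0:ℝ) 1, g q ∈ Icc (0:ℝ) 1

/-- The dual distortion function `ḡ(q) = 1 - g(1 - q)`. -/
def dualDistortion (g : ℝ → ℝ) : ℝ → ℝ := fun q => 1 - g (1 - q)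

/-- The distortion risk measure
`ρ_g[X] = -∫_{-∞}^0 (1 - g(P(X > x))) dx + ∫_0^∞ g(P(X > x)) dx`. -/
def rho (P : Measure Ω) (g : ℝ → ℝ) (X : Ω → ℝ) : ℝ :=
  (- ∫ x in Iio (0:ℝ), (1 - g (rvSurv P X x))) + ∫ x in Ioi (0:ℝ), g (rvSurv P X x)

/-- The two integrals defining the distortion risk measure `ρ_g[X]` are finite. -/
def RhoFinite (P : Measure Ω) (g : ℝ → ℝ) (X : Ω → ℝ) : Prop :=
  IntegrableOn (fun x => 1 - g (rvSurv P X x)) (Iio (0:ℝ)) volume ∧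
  IntegrableOn (fun x => g (rvSurv P X x)) (Ioi (0:ℝ)) volume

/-- `U` is uniformly distributed on `[0,1]`. -/
def IsUniform01 (P : Measure Ω) (U : Ω → ℝ) : Prop :=
  Measurable U ∧ Measure.map U P = volume.restrict (Icc (0:ℝ) 1)

/-- The counter-monotonic sum `S⁻ = F_{X₁}⁻¹(U) + F_{X₂}⁻¹(1 - U)`. -/
def cmSum (P : Measure Ω) (X₁ X₂ : Ω → ℝ) (U : Ω → ℝ) : Ω → ℝ :=
  fun ω => leftInv (rvCdf P X₁) (U ω) + leftInv (rvCdf P X₂) (1 - U ω)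

/-- `X` is symmetric: for some `m`, `P(X ≤ m - x) = P(X ≥ m + x)` for all `x`. -/
def IsSymmetricRV (P : Measure Ω) (X : Ω → ℝ) : Prop :=
  ∃ m : ℝ, ∀ x : ℝ, P {ω | X ω ≤ m - x} = P {ω | m + x ≤ X ω}

/-- Dispersive order `X ≤_disp Y`. -/
def DispLE (P : Measure Ω) (X Y : Ω → ℝ) : Prop :=
  ∀ u v : ℝ, 0 < v → v ≤ u → u < 1 →
    leftInv (rvCdf P X) u - leftInv (rvCdf P X) v ≤
      leftInv (rvCdf P Y) u - leftInv (rvCdf P Y) v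

/-- The cdf of `X` is continuous and strictly increasing on `(F⁻¹⁺(0), F⁻¹(1))`. -/
def CdfRegular (P : Measure Ω) (X : Ω → ℝ) : Prop :=
  ContinuousOn (rvCdf P X) (Ioo (rightInv (rvCdf P X) 0) (leftInv (rvCdf P X) 1)) ∧
  StrictMonoOn (rvCdf P X) (Ioo (rightInv (rvCdf P X) 0) (leftInv (rvCdf P X) 1))

/-- Value-at-Risk `VaR_p[X] = F_X⁻¹(p)`. -/
def VaR (P : Measure Ω) (X : Ω → ℝ) (p : ℝ) : ℝ := leftInv (rvCdf P X) p

/-- Tail-Value-at-Risk `TVaR_p[X] = (1/(1-p)) ∫_p^1 F_X⁻¹(q) dq`. -/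
def TVaR (P : Measure Ω) (X : Ω → ℝ) (p : ℝ) : ℝ :=
  (1 - p)⁻¹ * ∫ q in p..1, leftInv (rvCdf P X) q

/-- Left-Tail-Value-at-Risk `LTVaR_p[X] = (1/p) ∫_0^p F_X⁻¹(q) dq`. -/
def LTVaR (P : Measure Ω) (X : Ω → ℝ) (p : ℝ) : ℝ :=
  p⁻¹ * ∫ q in (0:ℝ)..p, leftInv (rvCdf P X) q

/-- The standard normal cdf `Φ`. -/
def stdNormCdf : ℝ → ℝ := fun x => ((gaussianReal 0 1) (Iic x)).toReal

/-- The inverse `Φ⁻¹` of the standard normal cdf. -/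
def stdNormInv : ℝ → ℝ := fun p => sInf {x | p ≤ stdNormCdf x}

/-- The Wang transform distortion function at level `p`. -/
def wangG (p : ℝ) : ℝ → ℝ := fun q => stdNormCdf (stdNormInv q + stdNormInv p)

/-- The Wang transform risk measure at level `p`. -/
def WT (P : Measure Ω) (X : Ω → ℝ) (p : ℝ) : ℝ := rho P (wangG p) X

/-- `X ~ N(μ, σ²)`. -/
def IsNormalRV (P : Measure Ω) (X : Ω → ℝ) (μ σ : ℝ) : Prop :=
  Measurable X ∧ Measure.map X P = gaussianReal μ (⟨σ ^ 2, sq_nonneg σ⟩ : NNReal)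

/-- `X ~ LN(μ, σ²)`, i.e. `X` is distributed as `exp Z` with `Z ~ N(μ, σ²)`. -/
def IsLogNormalRV (P : Measure Ω) (X : Ω → ℝ) (μ σ : ℝ) : Prop :=
  Measurable X ∧
    Measure.map X P = Measure.map Real.exp (gaussianReal μ (⟨σ ^ 2, sq_nonneg σ⟩ : NNReal))

/-- `X ~ Student(ν)`: density proportional to `(1 + x²/ν)^(-(ν+1)/2)`. -/
def IsStudentRV (P : Measure Ω) (X : Ω → ℝ) (ν : ℝ) : Prop :=
  Measurable X ∧ ∃ c : ℝ, 0 < c ∧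
    Measure.map X P =
      volume.withDensity (fun x => ENNReal.ofReal (c * (1 + x ^ 2 / ν) ^ (-((ν + 1) / 2))))

/-- Extension of a distortion function to `ℝ` by constants. -/
def gExt (g : ℝ → ℝ) : ℝ → ℝ := fun q => if q ≤ 0 then 0 else if 1 ≤ q then 1 else g q

open Classical in
/-- The Lebesgue–Stieltjes measure `dg` associated with (the right-continuous modification of)
the extension of a distortion function `g` to `ℝ`. -/
def lsMeasure (g : ℝ → ℝ) : Measure ℝ :=
  if h : Monotone (gExt g) then h.stieltjesFunction.measure else 0


open Filter

lemma my18_phi_eq_cdf (x : ℝ) : stdNormCdf x = cdf (gaussianReal 0 1) x :=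
  (cdf_eq_real (μ := gaussianReal 0 1) x).symm

lemma my18_gr01 : (gaussianReal 0 1 : Measure ℝ) = volume.withDensity (gaussianPDF 0 1) :=
  gaussianReal_of_var_ne_zero 0 one_ne_zero

lemma my18_phi_mono : Monotone stdNormCdf := by
  intro a b hab
  rw [my18_phi_eq_cdf, my18_phi_eq_cdf]
  exact monotone_cdf _ hab

lemma my18_phi_nonneg (x : ℝ) : 0 ≤ stdNormCdf x := ENNReal.toReal_nonneg

lemma my18_phi_le_one (x : ℝ) : stdNormCdf x ≤ 1 := by
  rw [my18_phi_eq_cdf]; exact cdf_le_one _ x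

lemma my18_iic_split {a b : ℝ} (hab : a ≤ b) :
    (gaussianReal 0 1 : Measure ℝ) (Iic b)
      = (gaussianReal 0 1) (Iic a) + (gaussianReal 0 1) (Ioc a b) := by
  rw [← measure_union (Iic_disjoint_Ioc le_rfl) measurableSet_Ioc, Iic_union_Ioc_eq_Iic hab]

lemma my18_gaussian_pos_Ioc {a b : ℝ} (hab : a < b) :
    0 < (gaussianReal 0 1 : Measure ℝ) (Ioc a b) := by
  rw [my18_gr01, withDensity_apply _ measurableSet_Ioc]
  rw [lintegral_pos_iff_support (measurable_gaussianPDF 0 1)]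
  have hsupp : Function.support (gaussianPDF 0 1) = univ := by
    ext x
    simp [Function.mem_support, (gaussianPDF_pos 0 one_ne_zero x).ne']
  rw [Measure.restrict_apply (by rw [hsupp]; exact MeasurableSet.univ)]
  rw [hsupp, univ_inter, Real.volume_Ioc]
  simp [hab]

lemma my18_phi_strictMono : StrictMono stdNormCdf := by
  intro a b hab
  unfold stdNormCdf
  have h1 : (gaussianReal 0 1 : Measure ℝ) (Iic a) < (gaussianReal 0 1) (Iic b) := by
    rw [my18_iic_split hab.le]
    exact ENNReal.lt_add_right (measure_ne_top _ _) (my18_gaussian_pos_Ioc hab).ne'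
  exact (ENNReal.toReal_lt_toReal (measure_ne_top _ _) (measure_ne_top _ _)).2 h1

lemma my18_pdfReal_le_one (x : ℝ) : gaussianPDFReal 0 1 x ≤ 1 := by
  unfold gaussianPDFReal
  push_cast
  have h1 : Real.exp (-(x - 0) ^ 2 / (2 * 1)) ≤ 1 := by
    rw [Real.exp_le_one_iff]
    have : (0:ℝ) ≤ (x - 0)^2 := sq_nonneg _
    nlinarith
  have h2 : (Real.sqrt (2 * Real.pi * 1))⁻¹ ≤ 1 := by
    rw [mul_one]
    rw [inv_le_one_iff₀]
    right
    refine Real.one_le_sqrt.2 ?_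
    nlinarith [Real.pi_gt_three]
  have h3 : (0:ℝ) ≤ (Real.sqrt (2 * Real.pi * 1))⁻¹ := by positivity
  calc (Real.sqrt (2 * Real.pi * 1))⁻¹ * Real.exp (-(x - 0) ^ 2 / (2 * 1))
      ≤ 1 * 1 := mul_le_one₀ h2 (Real.exp_nonneg _) h1 |>.trans (by norm_num)
    _ = 1 := by norm_num

lemma my18_phi_sub_le {a b : ℝ} (hab : a ≤ b) : stdNormCdf b - stdNormCdf a ≤ b - a := by
  have hle : (gaussianReal 0 1 : Measure ℝ) (Ioc a b) ≤ ENNReal.ofReal (b - a) := by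
    rw [my18_gr01, withDensity_apply _ measurableSet_Ioc]
    calc ∫⁻ x in Ioc a b, gaussianPDF 0 1 x
        ≤ ∫⁻ _ in Ioc a b, 1 := by
          apply lintegral_mono
          intro x
          exact ENNReal.ofReal_le_one.2 (my18_pdfReal_le_one x)
      _ = ENNReal.ofReal (b - a) := by
          rw [setLIntegral_const, one_mul, Real.volume_Ioc]
  have heq : stdNormCdf b - stdNormCdf a = ((gaussianReal 0 1 : Measure ℝ) (Ioc a b)).toReal := by
    unfold stdNormCdf
    rw [my18_iic_split hab, ENNReal.toReal_add (measure_ne_top _ _) (measure_ne_top _ _)]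
    ring
  rw [heq]
  calc ((gaussianReal 0 1 : Measure ℝ) (Ioc a b)).toReal
      ≤ (ENNReal.ofReal (b - a)).toReal :=
        ENNReal.toReal_mono ENNReal.ofReal_ne_top hle
    _ = b - a := ENNReal.toReal_ofReal (by linarith)

lemma my18_phi_continuous : Continuous stdNormCdf := by
  refine (LipschitzWith.of_dist_le_mul (K := 1) (f := stdNormCdf) ?_).continuous
  intro a b
  rcases le_total a b with h | h
  · rw [Real.dist_eq, Real.dist_eq, abs_of_nonpos (by linarith [my18_phi_mono h]),
      abs_of_nonpos (by linarith)]
    simpa using my18_phi_sub_le h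
  · rw [Real.dist_eq, Real.dist_eq, abs_of_nonneg (by linarith [my18_phi_mono h]),
      abs_of_nonneg (by linarith)]
    simpa using my18_phi_sub_le h

lemma my18_phi_tendsto_atTop : Tendsto stdNormCdf atTop (nhds 1) := by
  have := tendsto_cdf_atTop (μ := gaussianReal 0 1)
  simpa [funext my18_phi_eq_cdf] using this

lemma my18_phi_tendsto_atBot : Tendsto stdNormCdf atBot (nhds 0) := by
  have := tendsto_cdf_atBot (μ := gaussianReal 0 1)
  simpa [funext my18_phi_eq_cdf] using this

lemma my18_phi_pos (x : ℝ) : 0 < stdNormCdf x := by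
  obtain ⟨y, hy1, hy2⟩ : ∃ y, stdNormCdf y < stdNormCdf x ∧ y < x := by
    refine ⟨x - 1, my18_phi_strictMono (by linarith), by linarith⟩
  linarith [my18_phi_nonneg y]

lemma my18_phi_lt_one (x : ℝ) : stdNormCdf x < 1 := by
  have := my18_phi_strictMono (show x < x + 1 by linarith)
  linarith [my18_phi_le_one (x + 1)]




lemma my18_gaussian_atom (x : ℝ) : (gaussianReal 0 1 : Measure ℝ) {x} = 0 := by
  rw [my18_gr01]
  refine le_antisymm ?_ zero_le
  rw [withDensity_apply _ (measurableSet_singleton x)]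
  calc ∫⁻ y in {x}, gaussianPDF 0 1 y ≤ ∫⁻ _ in ({x} : Set ℝ), ⊤ := lintegral_mono fun _ => le_top
    _ = 0 := by rw [setLIntegral_const]; simp

lemma my18_gaussian_map_neg :
    Measure.map (fun y : ℝ => -y) (gaussianReal 0 1) = gaussianReal 0 1 := by
  have h := gaussianReal_map_const_mul (μ := 0) (v := 1) (-1)
  have h2 : (NNReal.mk ((-1:ℝ)^2) (sq_nonneg _)) * 1 = 1 := by
    ext; norm_num
  rw [h2] at h
  simpa [neg_one_mul] using h

lemma my18_phi_neg (x : ℝ) : stdNormCdf (-x) = 1 - stdNormCdf x := by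
  have h1 : (gaussianReal 0 1 : Measure ℝ) (Iic (-x)) = (gaussianReal 0 1) (Ici x) := by
    conv_lhs => rw [← my18_gaussian_map_neg]
    rw [Measure.map_apply measurable_neg measurableSet_Iic]
    congr 1
    ext y
    simp [neg_le]
  have h2 : (gaussianReal 0 1 : Measure ℝ) (Ici x) = 1 - (gaussianReal 0 1) (Iio x) := by
    rw [← compl_Iio, measure_compl measurableSet_Iio (measure_ne_top _ _), measure_univ]
  have h3 : (gaussianReal 0 1 : Measure ℝ) (Iio x) = (gaussianReal 0 1) (Iic x) := by
    rw [← Iic_diff_right, measure_diff_null (my18_gaussian_atom x)]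
  unfold stdNormCdf
  rw [h1, h2, h3]
  rw [ENNReal.toReal_sub_of_le prob_le_one ENNReal.one_ne_top, ENNReal.toReal_one]

lemma my18_phi_surj {u : ℝ} (hu : u ∈ Ioo (0:ℝ) 1) : ∃ x, stdNormCdf x = u := by
  obtain ⟨a, ha⟩ : ∃ a, stdNormCdf a < u :=
    ((my18_phi_tendsto_atBot.eventually_lt_const hu.1).exists)
  obtain ⟨b, hb⟩ : ∃ b, u < stdNormCdf b :=
    ((my18_phi_tendsto_atTop.eventually_const_lt hu.2).exists)
  have hab : a ≤ b := by
    by_contra hh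
    push_neg at hh
    exact absurd (my18_phi_strictMono hh) (by linarith)
  obtain ⟨x, _, hx⟩ := intermediate_value_Icc hab my18_phi_continuous.continuousOn
    ⟨ha.le, hb.le⟩
  exact ⟨x, hx⟩

lemma my18_A_phi (x : ℝ) : stdNormInv (stdNormCdf x) = x := by
  unfold stdNormInv
  have : {y | stdNormCdf x ≤ stdNormCdf y} = Ici x := by
    ext y
    simp only [mem_setOf_eq, mem_Ici]
    exact ⟨fun h => by by_contra hh; push_neg at hh; exact absurd h (not_le.2 (my18_phi_strictMono hh)),
      fun h => my18_phi_strictMono.monotone h⟩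
  rw [this, csInf_Ici]

lemma my18_phi_A {u : ℝ} (hu : u ∈ Ioo (0:ℝ) 1) : stdNormCdf (stdNormInv u) = u := by
  obtain ⟨x, hx⟩ := my18_phi_surj hu
  rw [← hx, my18_A_phi, hx]

lemma my18_A_one_sub {u : ℝ} (hu : u ∈ Ioo (0:ℝ) 1) :
    stdNormInv (1 - u) = - stdNormInv u := by
  have h1 : stdNormCdf (- stdNormInv u) = 1 - u := by
    rw [my18_phi_neg, my18_phi_A hu]
  rw [← h1, my18_A_phi]

lemma my18_A_le_iff {u : ℝ} (hu : u ∈ Ioo (0:ℝ) 1) (t : ℝ) :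
    t ≤ stdNormInv u ↔ stdNormCdf t ≤ u := by
  constructor
  · intro h
    calc stdNormCdf t ≤ stdNormCdf (stdNormInv u) := my18_phi_strictMono.monotone h
      _ = u := my18_phi_A hu
  · intro h
    have h2 : stdNormCdf t ≤ stdNormCdf (stdNormInv u) := by rw [my18_phi_A hu]; exact h
    exact my18_phi_strictMono.le_iff_le.1 h2



lemma my18_le_phi_iff {u : ℝ} (hu : u ∈ Ioo (0:ℝ) 1) (t : ℝ) :
    u ≤ stdNormCdf t ↔ stdNormInv u ≤ t := by
  rw [← my18_phi_strictMono.le_iff_le (a := stdNormInv u) (b := t)]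
  rw [my18_phi_A hu]

lemma my18_leftInv_of_nonpos {F : ℝ → ℝ} (hF : ∀ x, 0 ≤ F x) {u : ℝ} (hu : u ≤ 0) :
    leftInv F u = 0 := by
  unfold leftInv
  have h1 : {x | u ≤ F x} = univ := eq_univ_of_forall fun x => hu.trans (hF x)
  rw [h1, csInf_of_not_bddBelow (by simpa using not_bddBelow_univ (α := ℝ)), Real.sInf_empty]

lemma my18_leftInv_of_one_le {F : ℝ → ℝ} (hF : ∀ x, F x < 1) {u : ℝ} (hu : 1 ≤ u) :
    leftInv F u = 0 := by
  unfold leftInv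
  have h1 : {x | u ≤ F x} = ∅ := by
    ext x
    simp only [mem_setOf_eq, mem_empty_iff_false, iff_false, not_le]
    exact (hF x).trans_le hu
  rw [h1, Real.sInf_empty]

variable {P : Measure Ω} [IsProbabilityMeasure P] {X : Ω → ℝ} {μ σ : ℝ}

lemma my18_rvCdf_nonneg (P : Measure Ω) (X : Ω → ℝ) (x : ℝ) : 0 ≤ rvCdf P X x :=
  ENNReal.toReal_nonneg

lemma my18_gaussian_affine (hσ : 0 < σ) (μ : ℝ) (y : ℝ) :
    (gaussianReal μ (⟨σ^2, sq_nonneg σ⟩ : NNReal) : Measure ℝ) (Iic y)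
      = (gaussianReal 0 1) (Iic ((y - μ)/σ)) := by
  have hmap : Measure.map (fun t => σ * t + μ) (gaussianReal 0 1)
      = gaussianReal μ (⟨σ^2, sq_nonneg σ⟩ : NNReal) := by
    have hcomp : (fun t : ℝ => σ * t + μ) = (· + μ) ∘ (fun t => σ * t) := rfl
    rw [hcomp, ← Measure.map_map (measurable_add_const μ) (measurable_const_mul σ)]
    rw [gaussianReal_map_const_mul σ, gaussianReal_map_add_const μ]
    congr 1
    · ring
    · ext; simp; rfl
  rw [← hmap, Measure.map_apply ((measurable_const_mul σ).add_const μ) measurableSet_Iic]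
  congr 1
  ext t
  simp only [mem_preimage, mem_Iic]
  rw [le_div_iff₀ hσ]
  constructor <;> intro h <;> nlinarith

lemma my18_lognormal_cdf (hX : IsLogNormalRV P X μ σ) (hσ : 0 < σ) (x : ℝ) :
    rvCdf P X x = if 0 < x then stdNormCdf ((Real.log x - μ)/σ) else 0 := by
  have h0 : {ω | X ω ≤ x} = X ⁻¹' (Iic x) := rfl
  unfold rvCdf
  rw [h0, ← Measure.map_apply hX.1 measurableSet_Iic, hX.2,
    Measure.map_apply Real.measurable_exp measurableSet_Iic]
  by_cases hx : 0 < x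
  · rw [if_pos hx]
    have hpre : Real.exp ⁻¹' (Iic x) = Iic (Real.log x) := by
      ext t
      simp only [mem_preimage, mem_Iic]
      exact (Real.le_log_iff_exp_le hx).symm
    rw [hpre, my18_gaussian_affine hσ]
    rfl
  · rw [if_neg hx]
    have hpre : Real.exp ⁻¹' (Iic x) = ∅ := by
      ext t
      simp only [mem_preimage, mem_Iic, mem_empty_iff_false, iff_false, not_le]
      exact lt_of_le_of_lt (not_lt.1 hx) (Real.exp_pos t)
    rw [hpre]
    simp

lemma my18_lognormal_cdf_lt_one (hX : IsLogNormalRV P X μ σ) (hσ : 0 < σ) (x : ℝ) :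
    rvCdf P X x < 1 := by
  rw [my18_lognormal_cdf hX hσ]
  split
  · exact my18_phi_lt_one _
  · norm_num

lemma my18_lognormal_quantile (hX : IsLogNormalRV P X μ σ) (hσ : 0 < σ) {u : ℝ}
    (hu : u ∈ Ioo (0:ℝ) 1) :
    leftInv (rvCdf P X) u = Real.exp (μ + σ * stdNormInv u) := by
  set x₀ := Real.exp (μ + σ * stdNormInv u) with hx₀
  have hx₀pos : 0 < x₀ := Real.exp_pos _
  have hset : {x | u ≤ rvCdf P X x} = Ici x₀ := by
    ext x
    simp only [mem_setOf_eq, mem_Ici]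
    rw [my18_lognormal_cdf hX hσ]
    constructor
    · intro h
      by_cases hx : 0 < x
      · rw [if_pos hx] at h
        have h2 : stdNormInv u ≤ (Real.log x - μ)/σ := (my18_le_phi_iff hu _).1 h
        have h3 : μ + σ * stdNormInv u ≤ Real.log x := by
          have := (le_div_iff₀ hσ).1 h2
          nlinarith
        calc x₀ ≤ Real.exp (Real.log x) := Real.exp_le_exp.2 h3
          _ = x := Real.exp_log hx
      · rw [if_neg hx] at h
        linarith [hu.1]
    · intro h
      have hx : 0 < x := lt_of_lt_of_le hx₀pos h
      rw [if_pos hx]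
      rw [my18_le_phi_iff hu]
      rw [le_div_iff₀ hσ]
      have : μ + σ * stdNormInv u ≤ Real.log x := by
        rw [← Real.log_exp (μ + σ * stdNormInv u)]
        exact Real.log_le_log hx₀pos h
      nlinarith
  unfold leftInv
  rw [hset, csInf_Ici]



def my18_hfun (μ₁ μ₂ σ₁ σ₂ : ℝ) : ℝ → ℝ :=
  fun t => Real.exp (μ₁ + σ₁ * t) + Real.exp (μ₂ - σ₂ * t)

def my18_tstar (μ₁ μ₂ σ₁ σ₂ : ℝ) : ℝ := (μ₂ - μ₁ + Real.log (σ₂ / σ₁)) / (σ₁ + σ₂)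

variable {μ₁ μ₂ σ₁ σ₂ : ℝ}

lemma my18_hfun_pos (t : ℝ) : 0 < my18_hfun μ₁ μ₂ σ₁ σ₂ t :=
  add_pos (Real.exp_pos _) (Real.exp_pos _)

lemma my18_hfun_continuous : Continuous (my18_hfun μ₁ μ₂ σ₁ σ₂) := by
  unfold my18_hfun; fun_prop

lemma my18_hfun_hasDerivAt (t : ℝ) :
    HasDerivAt (my18_hfun μ₁ μ₂ σ₁ σ₂)
      (σ₁ * Real.exp (μ₁ + σ₁ * t) - σ₂ * Real.exp (μ₂ - σ₂ * t)) t := by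
  have h1 : HasDerivAt (fun t : ℝ => μ₁ + σ₁ * t) σ₁ t := by
    simpa using (hasDerivAt_id t).const_mul σ₁ |>.const_add μ₁
  have h2 : HasDerivAt (fun t : ℝ => μ₂ - σ₂ * t) (-σ₂) t := by
    have := (((hasDerivAt_id t).const_mul σ₂).const_sub μ₂)
    simpa using this
  have e1 := h1.exp
  have e2 := h2.exp
  have := e1.add e2
  simp only [mul_comm] at this ⊢
  refine this.congr_deriv ?_
  ring

lemma my18_deriv_key (hσ₁ : 0 < σ₁) (hσ₂ : 0 < σ₂) {t : ℝ} :
    (σ₁ * Real.exp (μ₁ + σ₁ * t) < σ₂ * Real.exp (μ₂ - σ₂ * t)) ↔ t < my18_tstar μ₁ μ₂ σ₁ σ₂ := by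
  rw [← Real.log_lt_log_iff (by positivity) (by positivity)]
  rw [Real.log_mul hσ₁.ne' (Real.exp_ne_zero _), Real.log_mul hσ₂.ne' (Real.exp_ne_zero _),
    Real.log_exp, Real.log_exp]
  have hlog : Real.log (σ₂ / σ₁) = Real.log σ₂ - Real.log σ₁ :=
    Real.log_div hσ₂.ne' hσ₁.ne'
  unfold my18_tstar
  rw [lt_div_iff₀ (by linarith), hlog]
  constructor <;> intro h <;> nlinarith

lemma my18_hfun_deriv (t : ℝ) :
    deriv (my18_hfun μ₁ μ₂ σ₁ σ₂) t
      = σ₁ * Real.exp (μ₁ + σ₁ * t) - σ₂ * Real.exp (μ₂ - σ₂ * t) :=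
  (my18_hfun_hasDerivAt t).deriv

lemma my18_deriv_key' (hσ₁ : 0 < σ₁) (hσ₂ : 0 < σ₂) {t : ℝ} :
    (σ₂ * Real.exp (μ₂ - σ₂ * t) < σ₁ * Real.exp (μ₁ + σ₁ * t)) ↔ my18_tstar μ₁ μ₂ σ₁ σ₂ < t := by
  rw [← Real.log_lt_log_iff (by positivity) (by positivity)]
  rw [Real.log_mul hσ₁.ne' (Real.exp_ne_zero _), Real.log_mul hσ₂.ne' (Real.exp_ne_zero _),
    Real.log_exp, Real.log_exp]
  have hlog : Real.log (σ₂ / σ₁) = Real.log σ₂ - Real.log σ₁ :=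
    Real.log_div hσ₂.ne' hσ₁.ne'
  unfold my18_tstar
  rw [div_lt_iff₀ (by linarith), hlog]
  constructor <;> intro h <;> nlinarith

lemma my18_hfun_strictAntiOn (hσ₁ : 0 < σ₁) (hσ₂ : 0 < σ₂) :
    StrictAntiOn (my18_hfun μ₁ μ₂ σ₁ σ₂) (Iic (my18_tstar μ₁ μ₂ σ₁ σ₂)) := by
  apply strictAntiOn_of_deriv_neg (convex_Iic _) my18_hfun_continuous.continuousOn
  intro t ht
  rw [interior_Iic] at ht
  rw [my18_hfun_deriv]
  have := (my18_deriv_key hσ₁ hσ₂ (t := t)).2 ht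
  linarith

lemma my18_hfun_strictMonoOn (hσ₁ : 0 < σ₁) (hσ₂ : 0 < σ₂) :
    StrictMonoOn (my18_hfun μ₁ μ₂ σ₁ σ₂) (Ici (my18_tstar μ₁ μ₂ σ₁ σ₂)) := by
  apply strictMonoOn_of_deriv_pos (convex_Ici _) my18_hfun_continuous.continuousOn
  intro t ht
  rw [interior_Ici] at ht
  rw [my18_hfun_deriv]
  have := (my18_deriv_key' hσ₁ hσ₂ (t := t)).2 ht
  linarith

lemma my18_hfun_min (hσ₁ : 0 < σ₁) (hσ₂ : 0 < σ₂) {t : ℝ} (ht : t ≠ my18_tstar μ₁ μ₂ σ₁ σ₂) :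
    my18_hfun μ₁ μ₂ σ₁ σ₂ (my18_tstar μ₁ μ₂ σ₁ σ₂) < my18_hfun μ₁ μ₂ σ₁ σ₂ t := by
  rcases lt_or_gt_of_ne ht with h | h
  · exact my18_hfun_strictAntiOn hσ₁ hσ₂ h.le self_mem_Iic h
  · exact my18_hfun_strictMonoOn hσ₁ hσ₂ self_mem_Ici h.le h

lemma my18_hfun_min_le (hσ₁ : 0 < σ₁) (hσ₂ : 0 < σ₂) (t : ℝ) :
    my18_hfun μ₁ μ₂ σ₁ σ₂ (my18_tstar μ₁ μ₂ σ₁ σ₂) ≤ my18_hfun μ₁ μ₂ σ₁ σ₂ t := by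
  by_cases h : t = my18_tstar μ₁ μ₂ σ₁ σ₂
  · rw [h]
  · exact (my18_hfun_min hσ₁ hσ₂ h).le

lemma my18_hfun_tendsto_atTop (hσ₁ : 0 < σ₁) :
    Tendsto (my18_hfun μ₁ μ₂ σ₁ σ₂) atTop atTop := by
  apply tendsto_atTop_mono (f := fun t => Real.exp (μ₁ + σ₁ * t))
  · intro t
    unfold my18_hfun
    linarith [Real.exp_pos (μ₂ - σ₂ * t)]
  · apply Real.tendsto_exp_atTop.comp
    apply tendsto_atTop_add_const_left
    exact Tendsto.const_mul_atTop hσ₁ tendsto_id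

lemma my18_hfun_neg_tendsto_atTop (hσ₂ : 0 < σ₂) :
    Tendsto (fun t => my18_hfun μ₁ μ₂ σ₁ σ₂ (-t)) atTop atTop := by
  apply tendsto_atTop_mono (f := fun t => Real.exp (μ₂ + σ₂ * t))
  · intro t
    unfold my18_hfun
    have : μ₂ - σ₂ * (-t) = μ₂ + σ₂ * t := by ring
    rw [this]
    linarith [Real.exp_pos (μ₁ + σ₁ * (-t))]
  · apply Real.tendsto_exp_atTop.comp
    apply tendsto_atTop_add_const_left
    exact Tendsto.const_mul_atTop hσ₂ tendsto_id

/-- Generic inverse construction for a continuous function strictly monotone on `Ici c`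
tending to `atTop`. -/
lemma my18_invAux {f : ℝ → ℝ} {c : ℝ} (hf : Continuous f) (hm : StrictMonoOn f (Ici c))
    (ht : Tendsto f atTop atTop) :
    ∃ r : ℝ → ℝ, (∀ s, f c < s → c < r s ∧ f (r s) = s) ∧
      (∀ t, c < t → r (f t) = t) ∧
      (∀ s ∈ Ioi (f c), ContinuousAt r s) := by
  have hex : ∀ s, f c < s → ∃ t, c < t ∧ f t = s := by
    intro s hs
    obtain ⟨T, hT1, hT2⟩ := ((ht.eventually_ge_atTop s).and (eventually_ge_atTop c)).exists
    obtain ⟨t, htmem, htval⟩ := intermediate_value_Icc hT2 hf.continuousOn ⟨hs.le, hT1⟩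
    refine ⟨t, ?_, htval⟩
    rcases eq_or_lt_of_le htmem.1 with h | h
    · exfalso; rw [← h] at htval; exact absurd htval (by linarith)
    · exact h
  classical
  set r : ℝ → ℝ := fun s => if h : f c < s then (hex s h).choose else 0 with hr
  have hprop : ∀ s, f c < s → c < r s ∧ f (r s) = s := by
    intro s hs
    rw [hr]
    simp only [dif_pos hs]
    exact ⟨(hex s hs).choose_spec.1, (hex s hs).choose_spec.2⟩
  have hltf : ∀ t, c < t → f c < f t := fun t h => hm self_mem_Ici h.le h
  have hrf : ∀ t, c < t → r (f t) = t := by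
    intro t htc
    have h1 := hprop (f t) (hltf t htc)
    exact hm.injOn (mem_Ici.2 h1.1.le) (mem_Ici.2 htc.le) h1.2
  refine ⟨r, hprop, hrf, ?_⟩
  have hmono : MonotoneOn r (Ioi (f c)) := by
    intro s hs s' hs' hss
    by_contra hcon
    push_neg at hcon
    have h1 := hprop s hs
    have h2 := hprop s' hs'
    have := hm (mem_Ici.2 h2.1.le) (mem_Ici.2 h1.1.le) hcon
    rw [h1.2, h2.2] at this
    exact absurd hss (not_le.2 this)
  have himg : r '' (Ioi (f c)) = Ioi c := by
    ext t
    constructor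
    · rintro ⟨s, hs, rfl⟩
      exact (hprop s hs).1
    · intro htc
      exact ⟨f t, hltf t htc, hrf t htc⟩
  intro s hs
  apply continuousAt_of_monotoneOn_of_image_mem_nhds hmono (Ioi_mem_nhds hs)
  rw [himg]
  exact Ioi_mem_nhds (hprop s hs).1


lemma my18_hfun_sublevel {μ₁ μ₂ σ₁ σ₂ : ℝ} (hσ₁ : 0 < σ₁) (hσ₂ : 0 < σ₂) {s ta tb t : ℝ}
    (hta : ta < my18_tstar μ₁ μ₂ σ₁ σ₂) (htb : my18_tstar μ₁ μ₂ σ₁ σ₂ < tb)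
    (h1 : my18_hfun μ₁ μ₂ σ₁ σ₂ ta = s) (h2 : my18_hfun μ₁ μ₂ σ₁ σ₂ tb = s) :
    my18_hfun μ₁ μ₂ σ₁ σ₂ t ≤ s ↔ ta ≤ t ∧ t ≤ tb := by
  have hanti := my18_hfun_strictAntiOn (μ₁ := μ₁) (μ₂ := μ₂) hσ₁ hσ₂
  have hmono := my18_hfun_strictMonoOn (μ₁ := μ₁) (μ₂ := μ₂) hσ₁ hσ₂
  constructor
  · intro hle
    constructor
    · by_contra hcon
      push_neg at hcon
      have := hanti (mem_Iic.2 (by linarith : t ≤ my18_tstar μ₁ μ₂ σ₁ σ₂)) (mem_Iic.2 hta.le) hcon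
      rw [h1] at this
      linarith
    · by_contra hcon
      push_neg at hcon
      have := hmono (mem_Ici.2 htb.le) (mem_Ici.2 (by linarith : my18_tstar μ₁ μ₂ σ₁ σ₂ ≤ t)) hcon
      rw [h2] at this
      linarith
  · rintro ⟨hl, hr⟩
    rcases le_total t (my18_tstar μ₁ μ₂ σ₁ σ₂) with hcase | hcase
    · calc my18_hfun μ₁ μ₂ σ₁ σ₂ t ≤ my18_hfun μ₁ μ₂ σ₁ σ₂ ta :=
          hanti.antitoneOn (mem_Iic.2 hta.le) (mem_Iic.2 hcase) hl
        _ = s := h1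
    · calc my18_hfun μ₁ μ₂ σ₁ σ₂ t ≤ my18_hfun μ₁ μ₂ σ₁ σ₂ tb :=
          hmono.monotoneOn (mem_Ici.2 hcase) (mem_Ici.2 htb.le) hr
        _ = s := h2

lemma my18_hfun_level {μ₁ μ₂ σ₁ σ₂ : ℝ} (hσ₁ : 0 < σ₁) (hσ₂ : 0 < σ₂) {s ta tb t : ℝ}
    (hta : ta < my18_tstar μ₁ μ₂ σ₁ σ₂) (htb : my18_tstar μ₁ μ₂ σ₁ σ₂ < tb)
    (h1 : my18_hfun μ₁ μ₂ σ₁ σ₂ ta = s) (h2 : my18_hfun μ₁ μ₂ σ₁ σ₂ tb = s) :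
    my18_hfun μ₁ μ₂ σ₁ σ₂ t = s ↔ t = ta ∨ t = tb := by
  constructor
  · intro hts
    rcases le_total t (my18_tstar μ₁ μ₂ σ₁ σ₂) with hcase | hcase
    · left
      exact (my18_hfun_strictAntiOn hσ₁ hσ₂).injOn (mem_Iic.2 hcase) (mem_Iic.2 hta.le)
        (by rw [hts, h1])
    · right
      exact (my18_hfun_strictMonoOn hσ₁ hσ₂).injOn (mem_Ici.2 hcase) (mem_Ici.2 htb.le)
        (by rw [hts, h2])
  · rintro (rfl | rfl)
    · exact h1
    · exact h2

variable {P : Measure Ω} [IsProbabilityMeasure P] {X₁ X₂ U : Ω → ℝ} {μ₁ μ₂ σ₁ σ₂ : ℝ}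

lemma my18_rvCdf_mono (P : Measure Ω) [IsProbabilityMeasure P] (X : Ω → ℝ) :
    Monotone (rvCdf P X) := fun a b hab =>
  ENNReal.toReal_mono (measure_ne_top _ _)
    (measure_mono (fun ω (h : X ω ≤ a) => le_trans h hab))

lemma my18_cm_eq (hσ₁ : 0 < σ₁) (hσ₂ : 0 < σ₂) (h₁ : IsLogNormalRV P X₁ μ₁ σ₁)
    (h₂ : IsLogNormalRV P X₂ μ₂ σ₂) {u : ℝ} (hu : u ∈ Ioo (0:ℝ) 1) :
    leftInv (rvCdf P X₁) u + leftInv (rvCdf P X₂) (1 - u)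
      = my18_hfun μ₁ μ₂ σ₁ σ₂ (stdNormInv u) := by
  have hu' : 1 - u ∈ Ioo (0:ℝ) 1 := ⟨by linarith [hu.2], by linarith [hu.1]⟩
  rw [my18_lognormal_quantile h₁ hσ₁ hu, my18_lognormal_quantile h₂ hσ₂ hu', my18_A_one_sub hu]
  unfold my18_hfun
  have he : μ₂ + σ₂ * -(stdNormInv u) = μ₂ - σ₂ * stdNormInv u := by ring
  rw [he]

lemma my18_cm_zero (hσ₁ : 0 < σ₁) (hσ₂ : 0 < σ₂) (h₁ : IsLogNormalRV P X₁ μ₁ σ₁)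
    (h₂ : IsLogNormalRV P X₂ μ₂ σ₂) {u : ℝ} (hu : u ∉ Ioo (0:ℝ) 1) :
    leftInv (rvCdf P X₁) u + leftInv (rvCdf P X₂) (1 - u) = 0 := by
  have h0 : u ≤ 0 ∨ 1 ≤ u := by
    by_contra hcon
    push_neg at hcon
    exact hu ⟨hcon.1, hcon.2⟩
  rcases h0 with h | h
  · rw [my18_leftInv_of_nonpos (my18_rvCdf_nonneg P X₁) h,
      my18_leftInv_of_one_le (my18_lognormal_cdf_lt_one h₂ hσ₂) (by linarith : (1:ℝ) ≤ 1 - u)]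
    norm_num
  · rw [my18_leftInv_of_one_le (my18_lognormal_cdf_lt_one h₁ hσ₁) h,
      my18_leftInv_of_nonpos (my18_rvCdf_nonneg P X₂) (by linarith : 1 - u ≤ 0)]
    norm_num

lemma my18_cm_cdf_le (hσ₁ : 0 < σ₁) (hσ₂ : 0 < σ₂) (h₁ : IsLogNormalRV P X₁ μ₁ σ₁)
    (h₂ : IsLogNormalRV P X₂ μ₂ σ₂) (hU : IsUniform01 P U)
    {s : ℝ} (hs : s ≤ my18_hfun μ₁ μ₂ σ₁ σ₂ (my18_tstar μ₁ μ₂ σ₁ σ₂)) :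
    rvCdf P (cmSum P X₁ X₂ U) s = 0 := by
  set D := Iic (0:ℝ) ∪ Ici 1 ∪ {stdNormCdf (my18_tstar μ₁ μ₂ σ₁ σ₂)} with hD
  have hsub : {ω | cmSum P X₁ X₂ U ω ≤ s} ⊆ U ⁻¹' D := by
    intro ω hω
    have hω' : leftInv (rvCdf P X₁) (U ω) + leftInv (rvCdf P X₂) (1 - U ω) ≤ s := hω
    simp only [hD, mem_preimage, mem_union, mem_Iic, mem_Ici, mem_singleton_iff]
    by_cases hmem : U ω ∈ Ioo (0:ℝ) 1
    · right
      have heq := my18_cm_eq hσ₁ hσ₂ h₁ h₂ hmem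
      have h3 : my18_hfun μ₁ μ₂ σ₁ σ₂ (stdNormInv (U ω)) ≤ s := by rw [← heq]; exact hω'
      have h4 : stdNormInv (U ω) = my18_tstar μ₁ μ₂ σ₁ σ₂ := by
        by_contra hne
        have := my18_hfun_min hσ₁ hσ₂ hne
        linarith
      rw [← h4, my18_phi_A hmem]
    · left
      by_contra hcon
      push_neg at hcon
      exact hmem ⟨hcon.1, hcon.2⟩
  have hDmeas : MeasurableSet D :=
    (measurableSet_Iic.union measurableSet_Ici).union (measurableSet_singleton _)
  have h5 : P (U ⁻¹' D) = 0 := by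
    rw [← Measure.map_apply hU.1 hDmeas, hU.2, Measure.restrict_apply hDmeas]
    have hsub2 : (D ∩ Icc 0 1) ⊆ ({0, 1, stdNormCdf (my18_tstar μ₁ μ₂ σ₁ σ₂)} : Set ℝ) := by
      rintro x ⟨hx1, hx2, hx3⟩
      simp only [hD, mem_union, mem_Iic, mem_Ici, mem_singleton_iff] at hx1
      simp only [mem_insert_iff, mem_singleton_iff]
      rcases hx1 with (h0 | h0) | h0
      · exact Or.inl (le_antisymm h0 hx2)
      · exact Or.inr (Or.inl (le_antisymm hx3 h0))
      · exact Or.inr (Or.inr h0)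
    refine le_antisymm (le_trans (measure_mono hsub2) ?_) zero_le
    have hfin : ({0, 1, stdNormCdf (my18_tstar μ₁ μ₂ σ₁ σ₂)} : Set ℝ).Finite := by
      apply Set.Finite.insert
      apply Set.Finite.insert
      exact Set.finite_singleton _
    rw [hfin.measure_zero volume]
  unfold rvCdf
  rw [le_antisymm (le_trans (measure_mono hsub) h5.le) zero_le]
  simp

lemma my18_cm_cdf_gt (hσ₁ : 0 < σ₁) (hσ₂ : 0 < σ₂) (h₁ : IsLogNormalRV P X₁ μ₁ σ₁)
    (h₂ : IsLogNormalRV P X₂ μ₂ σ₂) (hU : IsUniform01 P U)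
    {s ta tb : ℝ} (hta : ta < my18_tstar μ₁ μ₂ σ₁ σ₂) (htb : my18_tstar μ₁ μ₂ σ₁ σ₂ < tb)
    (h1 : my18_hfun μ₁ μ₂ σ₁ σ₂ ta = s) (h2 : my18_hfun μ₁ μ₂ σ₁ σ₂ tb = s) :
    rvCdf P (cmSum P X₁ X₂ U) s = stdNormCdf tb - stdNormCdf ta := by
  have hs_pos : 0 < s := by rw [← h2]; exact my18_hfun_pos tb
  set E := Iic (0:ℝ) ∪ Ici 1 ∪ Icc (stdNormCdf ta) (stdNormCdf tb) with hE
  have hset : {ω | cmSum P X₁ X₂ U ω ≤ s} = U ⁻¹' E := by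
    ext ω
    simp only [mem_setOf_eq, mem_preimage, hE, mem_union, mem_Iic, mem_Ici, mem_Icc]
    show leftInv (rvCdf P X₁) (U ω) + leftInv (rvCdf P X₂) (1 - U ω) ≤ s ↔ _
    by_cases hmem : U ω ∈ Ioo (0:ℝ) 1
    · have heq := my18_cm_eq hσ₁ hσ₂ h₁ h₂ hmem
      have hiff := my18_hfun_sublevel hσ₁ hσ₂ hta htb h1 h2 (t := stdNormInv (U ω))
      constructor
      · intro hω
        have h3 := hiff.1 (by rw [← heq]; exact hω)
        refine Or.inr ⟨?_, ?_⟩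
        · calc stdNormCdf ta ≤ stdNormCdf (stdNormInv (U ω)) := my18_phi_strictMono.monotone h3.1
            _ = U ω := my18_phi_A hmem
        · calc U ω = stdNormCdf (stdNormInv (U ω)) := (my18_phi_A hmem).symm
            _ ≤ stdNormCdf tb := my18_phi_strictMono.monotone h3.2
      · intro hor
        rcases hor with (h0 | h0) | ⟨hl, hr⟩
        · linarith [hmem.1]
        · linarith [hmem.2]
        · have h3 : ta ≤ stdNormInv (U ω) ∧ stdNormInv (U ω) ≤ tb := by
            constructor
            · have hh : stdNormCdf ta ≤ stdNormCdf (stdNormInv (U ω)) := by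
                rw [my18_phi_A hmem]; exact hl
              exact my18_phi_strictMono.le_iff_le.1 hh
            · have hh : stdNormCdf (stdNormInv (U ω)) ≤ stdNormCdf tb := by
                rw [my18_phi_A hmem]; exact hr
              exact my18_phi_strictMono.le_iff_le.1 hh
          rw [heq]
          exact hiff.2 h3
    · have hz := my18_cm_zero hσ₁ hσ₂ h₁ h₂ hmem
      constructor
      · intro _
        left
        by_contra hcon
        push_neg at hcon
        exact hmem ⟨hcon.1, hcon.2⟩
      · intro _
        rw [hz]
        linarith
  have hEmeas : MeasurableSet E :=
    (measurableSet_Iic.union measurableSet_Ici).union measurableSet_Icc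
  have hpt : stdNormCdf ta ∈ Ioo (0:ℝ) 1 := ⟨my18_phi_pos ta, my18_phi_lt_one ta⟩
  have hptb : stdNormCdf tb ∈ Ioo (0:ℝ) 1 := ⟨my18_phi_pos tb, my18_phi_lt_one tb⟩
  have htatb : stdNormCdf ta ≤ stdNormCdf tb :=
    my18_phi_strictMono.monotone (le_of_lt (lt_trans hta htb))
  unfold rvCdf
  rw [hset, ← Measure.map_apply hU.1 hEmeas, hU.2, Measure.restrict_apply hEmeas]
  have hEicc : E ∩ Icc 0 1
      = ({0} : Set ℝ) ∪ {1} ∪ Icc (stdNormCdf ta) (stdNormCdf tb) := by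
    ext x
    simp only [hE, mem_inter_iff, mem_union, mem_Iic, mem_Ici, mem_Icc, mem_singleton_iff]
    constructor
    · rintro ⟨(h0 | h0) | h0, hx1, hx2⟩
      · exact Or.inl (Or.inl (le_antisymm h0 hx1))
      · exact Or.inl (Or.inr (le_antisymm hx2 h0))
      · exact Or.inr h0
    · rintro ((rfl | rfl) | h0)
      · exact ⟨Or.inl (Or.inl le_rfl), le_rfl, zero_le_one⟩
      · exact ⟨Or.inl (Or.inr le_rfl), zero_le_one, le_rfl⟩
      · exact ⟨Or.inr h0, by linarith [hpt.1, h0.1], by linarith [hptb.2, h0.2]⟩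
  rw [hEicc]
  have hvol : volume (({0} : Set ℝ) ∪ {1} ∪ Icc (stdNormCdf ta) (stdNormCdf tb))
      = volume (Icc (stdNormCdf ta) (stdNormCdf tb)) := by
    refine le_antisymm ?_ (measure_mono subset_union_right)
    calc volume (({0} : Set ℝ) ∪ {1} ∪ Icc (stdNormCdf ta) (stdNormCdf tb))
        ≤ volume (({0} : Set ℝ) ∪ {1}) + volume (Icc (stdNormCdf ta) (stdNormCdf tb)) :=
          measure_union_le _ _
      _ = volume (Icc (stdNormCdf ta) (stdNormCdf tb)) := by
          have : volume (({0} : Set ℝ) ∪ {1}) = 0 := by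
            refine le_antisymm (le_trans (measure_union_le _ _) ?_) zero_le
            simp
          rw [this, zero_add]
  rw [hvol, Real.volume_Icc, ENNReal.toReal_ofReal (by linarith)]



/-- VaR of the counter-monotonic sum of two non-identically distributed
log-normal risks: the level set of the aggregate loss function at the quantile has exactly
two elements and each yields a decomposition of the VaR. -/
theorem lognormal_nonid_cm_sum_VaR
    (P : Measure Ω) [IsProbabilityMeasure P]
    (X₁ X₂ U : Ω → ℝ) (μ₁ μ₂ σ₁ σ₂ : ℝ) (hσ₁ : 0 < σ₁) (hσ₂ : 0 < σ₂)
    (h₁ : IsLogNormalRV P X₁ μ₁ σ₁) (h₂ : IsLogNormalRV P X₂ μ₂ σ₂)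
    (hne : (μ₁, σ₁) ≠ (μ₂, σ₂))
    (hU : IsUniform01 P U)
    (φ : ℝ → ℝ)
    (hφ : ∀ u, φ u = leftInv (rvCdf P X₁) u + leftInv (rvCdf P X₂) (1 - u))
    (p : ℝ) (hp : p ∈ Ioo (0:ℝ) 1) :
    ∃ u₁ u₂ : ℝ, u₁ < u₂ ∧
      {u ∈ Ioo (0:ℝ) 1 | φ u = leftInv (rvCdf P (cmSum P X₁ X₂ U)) p} = {u₁, u₂} ∧
      VaR P (cmSum P X₁ X₂ U) p = VaR P X₁ u₁ + VaR P X₂ (1 - u₁) ∧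
      VaR P (cmSum P X₁ X₂ U) p = VaR P X₁ u₂ + VaR P X₂ (1 - u₂) := by
  classical
  obtain ⟨hp0, hp1⟩ := hp
  have hmono := my18_hfun_strictMonoOn (μ₁ := μ₁) (μ₂ := μ₂) hσ₁ hσ₂
  have hanti := my18_hfun_strictAntiOn (μ₁ := μ₁) (μ₂ := μ₂) hσ₁ hσ₂
  obtain ⟨R, hRprop, hRf, hRcont⟩ :=
    my18_invAux (f := my18_hfun μ₁ μ₂ σ₁ σ₂) my18_hfun_continuous hmono
      (my18_hfun_tendsto_atTop hσ₁)
  have hmono2 : StrictMonoOn (fun t => my18_hfun μ₁ μ₂ σ₁ σ₂ (-t))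
      (Ici (-(my18_tstar μ₁ μ₂ σ₁ σ₂))) := by
    intro a ha b hb hab
    exact hanti (mem_Iic.2 (by linarith [mem_Ici.1 hb]))
      (mem_Iic.2 (by linarith [mem_Ici.1 ha])) (by linarith)
  obtain ⟨L, hLprop, hLf, hLcont⟩ :=
    my18_invAux (my18_hfun_continuous.comp continuous_neg) hmono2
      (my18_hfun_neg_tendsto_atTop hσ₂)
  simp only [Function.comp, neg_neg] at hLprop hLcont
  have hta : ∀ s, my18_hfun μ₁ μ₂ σ₁ σ₂ (my18_tstar μ₁ μ₂ σ₁ σ₂) < s →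
      -(L s) < my18_tstar μ₁ μ₂ σ₁ σ₂ ∧ my18_hfun μ₁ μ₂ σ₁ σ₂ (-(L s)) = s := by
    intro s hs
    obtain ⟨ha, hb⟩ := hLprop s hs
    exact ⟨by linarith, hb⟩
  -- strict monotonicity of the two branches
  have hb_lt : ∀ s s', my18_hfun μ₁ μ₂ σ₁ σ₂ (my18_tstar μ₁ μ₂ σ₁ σ₂) < s → s < s' →
      R s < R s' := by
    intro s s' hs hss'
    have h1 := hRprop s hs
    have h2 := hRprop s' (hs.trans hss')
    by_contra hcon
    push_neg at hcon
    have := hmono.monotoneOn (mem_Ici.2 h2.1.le) (mem_Ici.2 h1.1.le) hcon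
    rw [h1.2, h2.2] at this
    linarith
  have ha_lt : ∀ s s', my18_hfun μ₁ μ₂ σ₁ σ₂ (my18_tstar μ₁ μ₂ σ₁ σ₂) < s → s < s' →
      -(L s') < -(L s) := by
    intro s s' hs hss'
    have h1 := hta s hs
    have h2 := hta s' (hs.trans hss')
    by_contra hcon
    push_neg at hcon
    have := hanti.antitoneOn (mem_Iic.2 h1.1.le) (mem_Iic.2 h2.1.le) hcon
    rw [h1.2, h2.2] at this
    linarith
  have hFgt : ∀ s, my18_hfun μ₁ μ₂ σ₁ σ₂ (my18_tstar μ₁ μ₂ σ₁ σ₂) < s →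
      rvCdf P (cmSum P X₁ X₂ U) s = stdNormCdf (R s) - stdNormCdf (-(L s)) := by
    intro s hs
    exact my18_cm_cdf_gt hσ₁ hσ₂ h₁ h₂ hU (hta s hs).1 (hRprop s hs).1
      (hta s hs).2 (hRprop s hs).2
  -- find s₂ with cdf value above p
  obtain ⟨T, hT1, hT2⟩ :=
    ((my18_phi_tendsto_atTop.eventually_const_lt (show 1 - (1-p)/2 < 1 by linarith)).and
      (eventually_gt_atTop (my18_tstar μ₁ μ₂ σ₁ σ₂))).exists
  obtain ⟨B, hB1, hB2⟩ :=
    ((my18_phi_tendsto_atBot.eventually_lt_const (show (0:ℝ) < (1-p)/2 by linarith)).and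
      (eventually_lt_atBot (my18_tstar μ₁ μ₂ σ₁ σ₂))).exists
  have hs₂ : my18_hfun μ₁ μ₂ σ₁ σ₂ (my18_tstar μ₁ μ₂ σ₁ σ₂)
      < max (my18_hfun μ₁ μ₂ σ₁ σ₂ T) (my18_hfun μ₁ μ₂ σ₁ σ₂ B) :=
    lt_of_lt_of_le (my18_hfun_min hσ₁ hσ₂ (ne_of_gt hT2)) (le_max_left _ _)
  set s₂ := max (my18_hfun μ₁ μ₂ σ₁ σ₂ T) (my18_hfun μ₁ μ₂ σ₁ σ₂ B) with hs₂def
  have htbs₂ : T ≤ R s₂ := by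
    by_contra hcon
    push_neg at hcon
    have := hmono (mem_Ici.2 (hRprop s₂ hs₂).1.le) (mem_Ici.2 hT2.le) hcon
    rw [(hRprop s₂ hs₂).2] at this
    have h4 := le_max_left (my18_hfun μ₁ μ₂ σ₁ σ₂ T) (my18_hfun μ₁ μ₂ σ₁ σ₂ B)
    rw [← hs₂def] at h4
    linarith
  have htas₂ : -(L s₂) ≤ B := by
    by_contra hcon
    push_neg at hcon
    have := hanti (mem_Iic.2 hB2.le) (mem_Iic.2 (hta s₂ hs₂).1.le) hcon
    rw [(hta s₂ hs₂).2] at this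
    have h4 := le_max_right (my18_hfun μ₁ μ₂ σ₁ σ₂ T) (my18_hfun μ₁ μ₂ σ₁ σ₂ B)
    rw [← hs₂def] at h4
    linarith
  have hFs₂ : p < rvCdf P (cmSum P X₁ X₂ U) s₂ := by
    rw [hFgt s₂ hs₂]
    have l1 : 1 - (1-p)/2 < stdNormCdf (R s₂) :=
      lt_of_lt_of_le hT1 (my18_phi_strictMono.monotone htbs₂)
    have l2 : stdNormCdf (-(L s₂)) < (1-p)/2 :=
      lt_of_le_of_lt (my18_phi_strictMono.monotone htas₂) hB1
    linarith
  -- find s₁ with cdf value below p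
  obtain ⟨δ, hδpos, hδ⟩ := Metric.continuousAt_iff.1
    (my18_phi_continuous.continuousAt (x := my18_tstar μ₁ μ₂ σ₁ σ₂)) (p/2) (by linarith)
  have hζlt : my18_tstar μ₁ μ₂ σ₁ σ₂ - δ/2 < my18_tstar μ₁ μ₂ σ₁ σ₂ := by linarith
  have hξgt : my18_tstar μ₁ μ₂ σ₁ σ₂ < my18_tstar μ₁ μ₂ σ₁ σ₂ + δ/2 := by linarith
  have hs₁ : my18_hfun μ₁ μ₂ σ₁ σ₂ (my18_tstar μ₁ μ₂ σ₁ σ₂)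
      < min (my18_hfun μ₁ μ₂ σ₁ σ₂ (my18_tstar μ₁ μ₂ σ₁ σ₂ - δ/2))
          (my18_hfun μ₁ μ₂ σ₁ σ₂ (my18_tstar μ₁ μ₂ σ₁ σ₂ + δ/2)) :=
    lt_min (my18_hfun_min hσ₁ hσ₂ (by intro hh; linarith [hh ▸ hζlt]))
      (my18_hfun_min hσ₁ hσ₂ (by intro hh; linarith [hh ▸ hξgt]))
  set s₁ := min (my18_hfun μ₁ μ₂ σ₁ σ₂ (my18_tstar μ₁ μ₂ σ₁ σ₂ - δ/2))
      (my18_hfun μ₁ μ₂ σ₁ σ₂ (my18_tstar μ₁ μ₂ σ₁ σ₂ + δ/2)) with hs₁def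
  have h2a : my18_tstar μ₁ μ₂ σ₁ σ₂ - δ/2 ≤ -(L s₁) := by
    by_contra hcon
    push_neg at hcon
    have := hanti (mem_Iic.2 (hta s₁ hs₁).1.le) (mem_Iic.2 hζlt.le) hcon
    rw [(hta s₁ hs₁).2] at this
    have h4 := min_le_left (my18_hfun μ₁ μ₂ σ₁ σ₂ (my18_tstar μ₁ μ₂ σ₁ σ₂ - δ/2))
      (my18_hfun μ₁ μ₂ σ₁ σ₂ (my18_tstar μ₁ μ₂ σ₁ σ₂ + δ/2))
    rw [← hs₁def] at h4
    linarith
  have h2b : R s₁ ≤ my18_tstar μ₁ μ₂ σ₁ σ₂ + δ/2 := by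
    by_contra hcon
    push_neg at hcon
    have := hmono (mem_Ici.2 hξgt.le) (mem_Ici.2 (hRprop s₁ hs₁).1.le) hcon
    rw [(hRprop s₁ hs₁).2] at this
    have h4 := min_le_right (my18_hfun μ₁ μ₂ σ₁ σ₂ (my18_tstar μ₁ μ₂ σ₁ σ₂ - δ/2))
      (my18_hfun μ₁ μ₂ σ₁ σ₂ (my18_tstar μ₁ μ₂ σ₁ σ₂ + δ/2))
    rw [← hs₁def] at h4
    linarith
  have hdζ : dist (my18_tstar μ₁ μ₂ σ₁ σ₂ - δ/2) (my18_tstar μ₁ μ₂ σ₁ σ₂) < δ := by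
    rw [Real.dist_eq]
    rw [abs_of_nonpos (by linarith)]
    linarith
  have hdξ : dist (my18_tstar μ₁ μ₂ σ₁ σ₂ + δ/2) (my18_tstar μ₁ μ₂ σ₁ σ₂) < δ := by
    rw [Real.dist_eq]
    rw [abs_of_nonneg (by linarith)]
    linarith
  have hζval := hδ hdζ
  have hξval := hδ hdξ
  rw [Real.dist_eq, abs_lt] at hζval hξval
  have hFs₁ : rvCdf P (cmSum P X₁ X₂ U) s₁ < p := by
    rw [hFgt s₁ hs₁]
    have l1 : stdNormCdf (R s₁) ≤ stdNormCdf (my18_tstar μ₁ μ₂ σ₁ σ₂ + δ/2) :=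
      my18_phi_strictMono.monotone h2b
    have l2 : stdNormCdf (my18_tstar μ₁ μ₂ σ₁ σ₂ - δ/2) ≤ stdNormCdf (-(L s₁)) :=
      my18_phi_strictMono.monotone h2a
    linarith [hζval.1, hζval.2, hξval.1, hξval.2]
  have h12 : s₁ ≤ s₂ := by
    by_contra hcon
    push_neg at hcon
    have := my18_rvCdf_mono P (cmSum P X₁ X₂ U) hcon.le
    linarith
  have hcontF : ContinuousOn (rvCdf P (cmSum P X₁ X₂ U)) (Icc s₁ s₂) := by
    intro s hs
    have hsgt : my18_hfun μ₁ μ₂ σ₁ σ₂ (my18_tstar μ₁ μ₂ σ₁ σ₂) < s :=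
      lt_of_lt_of_le hs₁ hs.1
    have hc1 : ContinuousAt (fun s => stdNormCdf (R s) - stdNormCdf (-(L s))) s :=
      (my18_phi_continuous.continuousAt.comp (hRcont s hsgt)).sub
        (my18_phi_continuous.continuousAt.comp ((hLcont s hsgt).neg))
    have hev : (fun s => stdNormCdf (R s) - stdNormCdf (-(L s)))
        =ᶠ[nhds s] rvCdf P (cmSum P X₁ X₂ U) :=
      eventually_of_mem (Ioi_mem_nhds hsgt) (fun x hx => (hFgt x hx).symm)
    exact (hc1.congr hev).continuousWithinAt
  obtain ⟨s₀, hs₀mem, hs₀val⟩ := intermediate_value_Icc h12 hcontF ⟨hFs₁.le, hFs₂.le⟩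
  have hs₀gt : my18_hfun μ₁ μ₂ σ₁ σ₂ (my18_tstar μ₁ μ₂ σ₁ σ₂) < s₀ :=
    lt_of_lt_of_le hs₁ hs₀mem.1
  have hVaR : leftInv (rvCdf P (cmSum P X₁ X₂ U)) p = s₀ := by
    unfold leftInv
    have hsetVaR : {s | p ≤ rvCdf P (cmSum P X₁ X₂ U) s} = Ici s₀ := by
      ext s
      simp only [mem_setOf_eq, mem_Ici]
      constructor
      · intro hps
        by_contra hcon
        push_neg at hcon
        rcases le_or_gt s (my18_hfun μ₁ μ₂ σ₁ σ₂ (my18_tstar μ₁ μ₂ σ₁ σ₂)) with h0 | h0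
        · rw [my18_cm_cdf_le hσ₁ hσ₂ h₁ h₂ hU h0] at hps
          linarith
        · have hR := hb_lt s s₀ h0 hcon
          have hL' := ha_lt s s₀ h0 hcon
          have e1 := hFgt s h0
          have e2 := hFgt s₀ hs₀gt
          have p1 := my18_phi_strictMono hR
          have p2 := my18_phi_strictMono hL'
          rw [hs₀val] at e2
          linarith
      · intro hle
        calc p = rvCdf P (cmSum P X₁ X₂ U) s₀ := hs₀val.symm
          _ ≤ rvCdf P (cmSum P X₁ X₂ U) s := my18_rvCdf_mono P (cmSum P X₁ X₂ U) hle
    rw [hsetVaR, csInf_Ici]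
  have hmema : stdNormCdf (-(L s₀)) ∈ Ioo (0:ℝ) 1 := ⟨my18_phi_pos _, my18_phi_lt_one _⟩
  have hmemb : stdNormCdf (R s₀) ∈ Ioo (0:ℝ) 1 := ⟨my18_phi_pos _, my18_phi_lt_one _⟩
  refine ⟨stdNormCdf (-(L s₀)), stdNormCdf (R s₀), ?_, ?_, ?_, ?_⟩
  · exact my18_phi_strictMono (lt_trans (hta s₀ hs₀gt).1 (hRprop s₀ hs₀gt).1)
  · ext u
    simp only [mem_setOf_eq, mem_insert_iff, mem_singleton_iff]
    constructor
    · rintro ⟨huIoo, hueq⟩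
      rw [hVaR, hφ u, my18_cm_eq hσ₁ hσ₂ h₁ h₂ huIoo] at hueq
      have hlev := (my18_hfun_level hσ₁ hσ₂ (hta s₀ hs₀gt).1 (hRprop s₀ hs₀gt).1
        (hta s₀ hs₀gt).2 (hRprop s₀ hs₀gt).2).1 hueq
      rcases hlev with h0 | h0
      · left
        rw [← my18_phi_A huIoo, h0]
      · right
        rw [← my18_phi_A huIoo, h0]
    · rintro (rfl | rfl)
      · refine ⟨hmema, ?_⟩
        rw [hVaR, hφ, my18_cm_eq hσ₁ hσ₂ h₁ h₂ hmema, my18_A_phi]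
        exact (hta s₀ hs₀gt).2
      · refine ⟨hmemb, ?_⟩
        rw [hVaR, hφ, my18_cm_eq hσ₁ hσ₂ h₁ h₂ hmemb, my18_A_phi]
        exact (hRprop s₀ hs₀gt).2
  · unfold VaR
    rw [hVaR, my18_cm_eq hσ₁ hσ₂ h₁ h₂ hmema, my18_A_phi]
    exact (hta s₀ hs₀gt).2.symm
  · unfold VaR
    rw [hVaR, my18_cm_eq hσ₁ hσ₂ h₁ h₂ hmemb, my18_A_phi]
    exact (hRprop s₀ hs₀gt).2.symm


end
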